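/- For any nonzero positive semi-definite Σ ∈ ℝ^{d×d}, ρ₁(Σ)²/d ≤ ρ₃(Σ) ≤ ρ₁(Σ)^{3/2}, where ρ₁(Σ) := tr(Σ)/‖Σ‖_op and ρ₃(Σ) := tr(Σ²)³/tr(Σ³)². -/

import Mathlib

lemma trace_pow_eq_sum_eigenvalues {d : ℕ} {A : Matrix (Fin d) (Fin d) ℝ}
    (hA : A.IsHermitian) (k : ℕ) :
    (A ^ k).trace = ∑ i, hA.eigenvalues i ^ k := by
  set U := (hA.eigenvectorUnitary : Matrix (Fin d) (Fin d) ℝ) with hUdef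
  have hU1 : star U * U = 1 := (Matrix.mem_unitaryGroup_iff').mp hA.eigenvectorUnitary.2
  have hU2 : U * star U = 1 := (Matrix.mem_unitaryGroup_iff).mp hA.eigenvectorUnitary.2
  have hdiag : star U * A * U = Matrix.diagonal (RCLike.ofReal ∘ hA.eigenvalues) :=
    by have := hA.conjStarAlgAut_star_eigenvectorUnitary; simpa [Unitary.conjStarAlgAut_apply, hUdef] using this
  have hk : star U * A ^ k * U = (Matrix.diagonal (RCLike.ofReal ∘ hA.eigenvalues)) ^ k := by
    induction k with
    | zero => simpa using hU1
    | succ n ih =>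
      have : star U * A ^ (n + 1) * U = (star U * A ^ n * U) * (star U * A * U) := by
        rw [pow_succ]
        simp only [Matrix.mul_assoc]
        rw [← Matrix.mul_assoc U (star U), hU2, Matrix.one_mul]
      rw [this, ih, hdiag, pow_succ]
  have htr : (A ^ k).trace = (star U * A ^ k * U).trace := by
    rw [Matrix.trace_mul_cycle, hU2, Matrix.one_mul]
  rw [htr, hk, Matrix.diagonal_pow, Matrix.trace_diagonal]
  simp [RCLike.ofReal]

/-- For any nonzero positive semi-definite `Σ ∈ ℝ^{d×d}`,
`ρ₁(Σ)²/d ≤ ρ₃(Σ) ≤ ρ₁(Σ)^{3/2}`, where `ρ₁(Σ) := tr(Σ)/‖Σ‖_op` (the operator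
norm being the largest eigenvalue) and `ρ₃(Σ) := tr(Σ²)³/tr(Σ³)²`. -/
theorem stmt_3 {d : ℕ} (A : Matrix (Fin d) (Fin d) ℝ)
    (hA : A.PosSemidef) (hA0 : A ≠ 0) :
    (A.trace / (⨆ i, hA.isHermitian.eigenvalues i)) ^ 2 / (d : ℝ)
        ≤ ((A ^ 2).trace) ^ 3 / ((A ^ 3).trace) ^ 2 ∧
      ((A ^ 2).trace) ^ 3 / ((A ^ 3).trace) ^ 2
        ≤ (A.trace / (⨆ i, hA.isHermitian.eigenvalues i)) ^ ((3 : ℝ) / 2) := by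
  classical
  set lam := hA.isHermitian.eigenvalues with hlam
  have hlam0 : ∀ i, 0 ≤ lam i := fun i => hA.eigenvalues_nonneg i
  -- d ≠ 0
  have hd : 0 < d := by
    rcases Nat.eq_zero_or_pos d with h | h
    · exfalso; apply hA0; subst h; exact Subsingleton.elim _ _
    · exact h
  haveI : Nonempty (Fin d) := ⟨⟨0, hd⟩⟩
  set M := ⨆ i, lam i with hM
  have hle : ∀ i, lam i ≤ M := fun i => le_ciSup (Set.Finite.bddAbove (Set.finite_range _)) i
  obtain ⟨j, hj⟩ : ∃ j, ∀ i, lam i ≤ lam j := Finite.exists_max lam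
  have hMj : M = lam j := le_antisymm (ciSup_le hj) (hle j)
  -- traces
  have h1 : A.trace = ∑ i, lam i := by
    have := trace_pow_eq_sum_eigenvalues hA.isHermitian 1
    simpa using this
  have h2 : (A ^ 2).trace = ∑ i, lam i ^ 2 := trace_pow_eq_sum_eigenvalues hA.isHermitian 2
  have h3 : (A ^ 3).trace = ∑ i, lam i ^ 3 := trace_pow_eq_sum_eigenvalues hA.isHermitian 3
  set S1 := ∑ i, lam i with hS1
  set S2 := ∑ i, lam i ^ 2 with hS2
  set S3 := ∑ i, lam i ^ 3 with hS3
  -- S1 > 0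
  have hS1pos : 0 < S1 := by
    rcases (Finset.sum_nonneg (fun i _ => hlam0 i)).lt_or_eq with h | h
    · exact h
    · exfalso
      have hall : ∀ i ∈ Finset.univ, lam i = 0 :=
        (Finset.sum_eq_zero_iff_of_nonneg (fun i _ => hlam0 i)).mp h.symm
      apply hA0
      have := hA.isHermitian.spectral_theorem
      rw [this]
      have : Matrix.diagonal (RCLike.ofReal ∘ lam) = (0 : Matrix (Fin d) (Fin d) ℝ) := by
        ext i k
        by_cases hik : i = k
        · subst hik; simp [Matrix.diagonal, hall i (Finset.mem_univ i)]
        · simp [Matrix.diagonal, hik]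
      rw [this]
      simp
  have hMpos : 0 < M := by
    by_contra h
    push_neg at h
    have : S1 ≤ 0 := by
      apply Finset.sum_nonpos
      intro i _
      exact (hle i).trans h
    linarith
  have hS2nonneg : 0 ≤ S2 := Finset.sum_nonneg fun i _ => sq_nonneg _
  have hS3nonneg : 0 ≤ S3 := Finset.sum_nonneg fun i _ => pow_nonneg (hlam0 i) 3
  -- S3 ≥ M^3
  have hS3geM : M ^ 3 ≤ S3 := by
    rw [hMj]
    exact Finset.single_le_sum (fun i _ => pow_nonneg (hlam0 i) 3) (Finset.mem_univ j)
  have hS3pos : 0 < S3 := lt_of_lt_of_le (pow_pos hMpos 3) hS3geM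
  -- S3 ≤ S2 * M
  have hS3le : S3 ≤ S2 * M := by
    rw [Finset.sum_mul]
    apply Finset.sum_le_sum
    intro i _
    calc lam i ^ 3 = lam i ^ 2 * lam i := by ring
    _ ≤ lam i ^ 2 * M := by
        exact mul_le_mul_of_nonneg_left (hle i) (sq_nonneg _)
  -- S1^2 ≤ d * S2
  have hCS1 : S1 ^ 2 ≤ (d : ℝ) * S2 := by
    have := Finset.sum_mul_sq_le_sq_mul_sq Finset.univ (fun _ : Fin d => (1 : ℝ)) lam
    simpa [hS1, hS2, Finset.card_univ] using this
  -- S2^2 ≤ S1 * S3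
  have hCS2 : S2 ^ 2 ≤ S1 * S3 := by
    have := Finset.sum_mul_sq_le_sq_mul_sq Finset.univ
      (fun i => Real.sqrt (lam i)) (fun i => lam i * Real.sqrt (lam i))
    have heq1 : ∀ i : Fin d, Real.sqrt (lam i) * (lam i * Real.sqrt (lam i)) = lam i ^ 2 := by
      intro i
      have : Real.sqrt (lam i) * Real.sqrt (lam i) = lam i := Real.mul_self_sqrt (hlam0 i)
      nlinarith [this]
    have heq2 : ∀ i : Fin d, Real.sqrt (lam i) ^ 2 = lam i := fun i => Real.sq_sqrt (hlam0 i)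
    have heq3 : ∀ i : Fin d, (lam i * Real.sqrt (lam i)) ^ 2 = lam i ^ 3 := by
      intro i
      rw [mul_pow, heq2 i]
      ring
    calc S2 ^ 2 = (∑ i, Real.sqrt (lam i) * (lam i * Real.sqrt (lam i))) ^ 2 := by
          rw [hS2]; congr 1; exact Finset.sum_congr rfl fun i _ => (heq1 i).symm
      _ ≤ (∑ i, Real.sqrt (lam i) ^ 2) * ∑ i, (lam i * Real.sqrt (lam i)) ^ 2 := this
      _ = S1 * S3 := by
          rw [hS1, hS3]
          congr 1
          · exact Finset.sum_congr rfl fun i _ => heq2 i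
          · exact Finset.sum_congr rfl fun i _ => heq3 i
  clear_value S3 S2 S1 M lam
  rw [h1, h2, h3]
  constructor
  · -- lower bound
    rw [div_le_div_iff₀ (by positivity) (by positivity), div_pow, div_mul_eq_mul_div,
        div_le_iff₀ (by positivity)]
    -- S1^2 * S3^2 ≤ S2^3 * (M^2 * d)
    have key : S3 ^ 2 ≤ S2 ^ 2 * M ^ 2 := by nlinarith [hS3le, hS3nonneg, mul_nonneg hS2nonneg hMpos.le]
    have key2 : S1 ^ 2 * S3 ^ 2 ≤ ((d:ℝ) * S2) * (S2 ^ 2 * M ^ 2) := by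
      apply mul_le_mul hCS1 key (by positivity) (by positivity)
    calc S1 ^ 2 * S3 ^ 2 ≤ ((d:ℝ) * S2) * (S2 ^ 2 * M ^ 2) := key2
      _ = S2 ^ 3 * ↑d * M ^ 2 := by ring
  · -- upper bound
    have hρ1 : (0:ℝ) ≤ S1 / M := by positivity
    have hρ3 : (0:ℝ) ≤ S2 ^ 3 / S3 ^ 2 := by positivity
    -- suffices (S2^3/S3^2)^2 ≤ (S1/M)^3
    have hsq : (S2 ^ 3 / S3 ^ 2) ^ 2 ≤ (S1 / M) ^ 3 := by
      rw [div_pow, div_pow, div_le_div_iff₀ (by positivity) (by positivity)]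
      -- S2^6 * M^3 ≤ S1^3 * S3^4
      have h6 : S2 ^ 6 ≤ S1 ^ 3 * S3 ^ 3 := by
        have h := pow_le_pow_left₀ (sq_nonneg S2) hCS2 3
        calc S2 ^ 6 = (S2 ^ 2) ^ 3 := by ring
          _ ≤ (S1 * S3) ^ 3 := h
          _ = S1 ^ 3 * S3 ^ 3 := by ring
      calc (S2 ^ 3) ^ 2 * M ^ 3 ≤ (S1 ^ 3 * S3 ^ 3) * S3 := by
            have := mul_le_mul h6 hS3geM (by positivity) (by positivity)
            calc (S2 ^ 3) ^ 2 * M ^ 3 = S2 ^ 6 * M ^ 3 := by ring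
              _ ≤ (S1 ^ 3 * S3 ^ 3) * S3 := this
        _ = S1 ^ 3 * (S3 ^ 2) ^ 2 := by ring
    have h2' : ((S1 / M) ^ ((3:ℝ)/2)) ^ (2:ℕ) = (S1 / M) ^ (3:ℕ) := by
      rw [← Real.rpow_natCast ((S1 / M) ^ ((3:ℝ)/2)) 2, ← Real.rpow_mul hρ1,
        ← Real.rpow_natCast (S1 / M) 3]
      norm_num
    have hXnn : 0 ≤ (S1 / M) ^ ((3:ℝ)/2) := Real.rpow_nonneg hρ1 _
    have hfin : (S2 ^ 3 / S3 ^ 2) ^ (2:ℕ) ≤ ((S1 / M) ^ ((3:ℝ)/2)) ^ (2:ℕ) := by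
      rw [h2']; exact hsq
    exact le_of_pow_le_pow_left₀ (by norm_num) hXnn hfin
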